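/- The interrobang function is uniformly continuous on [0,1] ∩ ℚ, and hence extends uniquely to a continuous, strictly increasing function ‽ : [0,1] → ℝ. -/

import Mathlib

/-- The defining functional equations of the interrobang function on `[0,1] ∩ ℚ`. -/
def InterrobangEq (f : ℚ → ℝ) : Prop :=
  f 0 = 0 ∧
  (∀ x : ℚ, 0 < x → x ≤ 1/2 →
    f x = (4 : ℝ) ^ (-⌊(1/x : ℚ)⌋) * (1 - 2 * f (Int.fract (1/x)))) ∧
  (∀ x : ℚ, 1/2 < x → x ≤ 1 →
    f x = 3/8 - 3/4 * f (1/x - 1) - 1/2 * f (1 - x))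

namespace Interrobang

/-! ### Rational arithmetic helpers -/

lemma den_add_int_dvd (q : ℚ) (n : ℤ) : (q + (n:ℚ)).den ∣ q.den := by
  have h := Rat.add_den_dvd q (n:ℚ)
  simpa [Rat.den_intCast] using h

lemma den_fract_dvd (q : ℚ) : (Int.fract q).den ∣ q.den := by
  have : Int.fract q = q + (-⌊q⌋ : ℤ) := by
    rw [Int.fract]; push_cast; ring
  rw [this]; exact den_add_int_dvd q _

lemma den_one_sub_dvd (q : ℚ) : (1 - q).den ∣ q.den := by
  have : (1 - q) = -q + ((1:ℤ):ℚ) := by push_cast; ring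
  rw [this]
  simpa [Rat.den_neg_eq_den] using den_add_int_dvd (-q) 1

lemma den_inv_dvd (q : ℚ) (hq : 0 < q) : ((1/q).den : ℤ) ∣ q.num := by
  rw [one_div, Rat.inv_def]
  exact Rat.den_dvd _ _

lemma den_inv_le (q : ℚ) (hq : 0 < q) : ((1/q).den : ℤ) ≤ q.num := by
  exact Int.le_of_dvd (Rat.num_pos.mpr hq) (den_inv_dvd q hq)

lemma two_num_le_den {x : ℚ} (h : x ≤ 1/2) : 2 * x.num ≤ (x.den : ℤ) := by
  have hd : (0:ℚ) < (x.den : ℚ) := by exact_mod_cast x.pos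
  have h1 : (x.num : ℚ) = x * x.den := (div_eq_iff hd.ne').mp (Rat.num_div_den x)
  have : (2 * x.num : ℚ) ≤ (x.den : ℚ) := by
    rw [h1]; nlinarith
  exact_mod_cast this

lemma two_num_lt_den {x : ℚ} (h : x < 1/2) : 2 * x.num < (x.den : ℤ) := by
  have hd : (0:ℚ) < (x.den : ℚ) := by exact_mod_cast x.pos
  have h1 : (x.num : ℚ) = x * x.den := (div_eq_iff hd.ne').mp (Rat.num_div_den x)
  have : (2 * x.num : ℚ) < (x.den : ℚ) := by
    rw [h1]; nlinarith
  exact_mod_cast this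

lemma num_lt_den {x : ℚ} (h : x < 1) : x.num < (x.den : ℤ) := by
  have hd : (0:ℚ) < (x.den : ℚ) := by exact_mod_cast x.pos
  have h1 : (x.num : ℚ) = x * x.den := (div_eq_iff hd.ne').mp (Rat.num_div_den x)
  have : (x.num : ℚ) < (x.den : ℚ) := by rw [h1]; nlinarith
  exact_mod_cast this

lemma den_lt_two_num {x : ℚ} (h : 1/2 < x) : (x.den : ℤ) < 2 * x.num := by
  have hd : (0:ℚ) < (x.den : ℚ) := by exact_mod_cast x.pos
  have h1 : (x.num : ℚ) = x * x.den := (div_eq_iff hd.ne').mp (Rat.num_div_den x)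
  have : (x.den : ℚ) < (2 * x.num : ℚ) := by rw [h1]; nlinarith
  exact_mod_cast this

/-- denominator of `Int.fract (1/x)` is at most `x.num` -/
lemma den_fract_inv_le {x : ℚ} (hx : 0 < x) :
    ((Int.fract (1/x)).den : ℤ) ≤ x.num := by
  have h1 : ((Int.fract (1/x)).den : ℤ) ∣ ((1/x).den : ℤ) :=
    Int.natCast_dvd_natCast.mpr (den_fract_dvd _)
  exact Int.le_of_dvd (Rat.num_pos.mpr hx) (h1.trans (den_inv_dvd x hx))

lemma den_inv_sub_one_le {x : ℚ} (hx : 0 < x) :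
    (((1/x) - 1).den : ℤ) ≤ x.num := by
  have h1 : (((1/x) - 1).den : ℤ) ∣ ((1/x).den : ℤ) := by
    have : (1/x) - 1 = (1/x) + ((-1 : ℤ) : ℚ) := by push_cast; ring
    rw [this]
    exact Int.natCast_dvd_natCast.mpr (den_add_int_dvd _ _)
  exact Int.le_of_dvd (Rat.num_pos.mpr hx) (h1.trans (den_inv_dvd x hx))

lemma den_one_sub_le (x : ℚ) : ((1 - x).den : ℤ) ≤ (x.den : ℤ) := by
  exact_mod_cast Nat.le_of_dvd x.pos (den_one_sub_dvd x)

section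

variable {f : ℚ → ℝ}

/-- The workhorse form of rule 1. -/
lemma eval1 (hf : InterrobangEq f) (n : ℤ) (u : ℚ) (h2 : 2 ≤ n) (h0 : 0 ≤ u) (h1 : u < 1) :
    f (1/((n:ℚ)+u)) = (4:ℝ) ^ (-n) * (1 - 2 * f u) := by
  have hnu : (2:ℚ) ≤ (n:ℚ) + u := by
    have : (2:ℚ) ≤ (n:ℚ) := by exact_mod_cast h2
    linarith
  have hnu0 : (0:ℚ) < (n:ℚ) + u := by linarith
  have hx0 : 0 < 1/((n:ℚ)+u) := by positivity
  have hx2 : 1/((n:ℚ)+u) ≤ 1/2 := by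
    rw [div_le_div_iff₀ hnu0 (by norm_num)]; linarith
  have hinv : 1/(1/((n:ℚ)+u)) = (n:ℚ) + u := by
    field_simp
  have hfl : ⌊(n:ℚ) + u⌋ = n := by
    rw [add_comm, Int.floor_add_intCast, Int.floor_eq_zero_iff.mpr ⟨h0, h1⟩, zero_add]
  have hfr : Int.fract ((n:ℚ) + u) = u := by
    rw [Int.fract_intCast_add, Int.fract_eq_self.mpr ⟨h0, h1⟩]
  have := hf.2.1 _ hx0 hx2
  rw [hinv, hfl, hfr] at this
  exact this

lemma f_zero (hf : InterrobangEq f) : f 0 = 0 := hf.1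

lemma f_one (hf : InterrobangEq f) : f 1 = 3/8 := by
  have := hf.2.2 1 (by norm_num) le_rfl
  norm_num [hf.1] at this
  convert this using 2 <;> norm_num

lemma f_unit (hf : InterrobangEq f) (n : ℤ) (h2 : 2 ≤ n) : f (1/(n:ℚ)) = (4:ℝ) ^ (-n) := by
  have := eval1 hf n 0 h2 le_rfl (by norm_num)
  simpa [hf.1] using this

lemma f_half (hf : InterrobangEq f) : f (1/2) = 1/16 := by
  have := f_unit hf 2 le_rfl
  norm_num at this
  convert this using 2 <;> norm_num

end


lemma pow4_pos (n : ℤ) : (0:ℝ) < (4:ℝ) ^ (-n) := by positivity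

lemma pow4_le {n : ℤ} (h : 2 ≤ n) : (4:ℝ) ^ (-n) ≤ 1/16 := by
  have h' : (4:ℝ) ^ (-n) ≤ (4:ℝ) ^ (-2:ℤ) := by
    apply zpow_le_zpow_right₀ (by norm_num : (1:ℝ) ≤ 4)
    omega
  rw [show ((4:ℝ)^(-2:ℤ)) = 1/16 by norm_num] at h'
  exact h'

lemma num_le_den {x : ℚ} (h : x ≤ 1) : x.num ≤ (x.den : ℤ) := by
  have hd : (0:ℚ) < (x.den : ℚ) := by exact_mod_cast x.pos
  have h1 : (x.num : ℚ) = x * x.den := (div_eq_iff hd.ne').mp (Rat.num_div_den x)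
  have : (x.num : ℚ) ≤ (x.den : ℚ) := by rw [h1]; nlinarith
  exact_mod_cast this

section
variable {f : ℚ → ℝ}

/-- decomposition of a rational in (0,1/2] -/
lemma decomp1 {x : ℚ} (hx0 : 0 < x) (hx2 : x ≤ 1/2) :
    ∃ n : ℤ, ∃ u : ℚ, 2 ≤ n ∧ 0 ≤ u ∧ u < 1 ∧ x = 1/((n:ℚ)+u) ∧
      ((u.den:ℤ) ≤ x.num) := by
  refine ⟨⌊(1/x : ℚ)⌋, Int.fract (1/x), ?_, Int.fract_nonneg _, Int.fract_lt_one _, ?_, ?_⟩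
  · rw [Int.le_floor]
    rw [le_div_iff₀ hx0]; push_cast; linarith
  · rw [Int.floor_add_fract]
    field_simp
  · exact den_fract_inv_le hx0

lemma f_bounds (hf : InterrobangEq f) :
    ∀ x : ℚ, 0 ≤ x → x ≤ 1 →
      0 ≤ f x ∧ f x ≤ 3/8 ∧ (x ≤ 1/2 → f x ≤ 1/16) ∧ (1/2 < x → 1/16 ≤ f x) := by
  suffices H : ∀ N : ℕ, ∀ x : ℚ, x.den ≤ N → 0 ≤ x → x ≤ 1 →
      0 ≤ f x ∧ f x ≤ 3/8 ∧ (x ≤ 1/2 → f x ≤ 1/16) ∧ (1/2 < x → 1/16 ≤ f x) by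
    intro x h0 h1; exact H x.den x le_rfl h0 h1
  intro N
  induction N with
  | zero => intro x h; exact absurd (x.pos.trans_le h) (lt_irrefl 0)
  | succ N ih =>
    intro x hden h0 h1
    rcases h0.eq_or_lt with rfl | hx0
    · exact ⟨le_of_eq hf.1.symm, by rw [hf.1]; norm_num, fun _ => by rw [hf.1]; norm_num,
        fun h => by norm_num at h⟩
    rcases eq_or_lt_of_le h1 with rfl | hx1
    · refine ⟨by rw [f_one hf]; norm_num, by rw [f_one hf], fun h => by norm_num at h,
        fun _ => by rw [f_one hf]; norm_num⟩
    by_cases hx2 : x ≤ 1/2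
    · -- rule 1
      obtain ⟨n, u, hn2, hu0, hu1, hxe, hud⟩ := decomp1 hx0 hx2
      have hfx : f x = (4:ℝ) ^ (-n) * (1 - 2 * f u) := by
        rw [hxe]; exact eval1 hf n u hn2 hu0 hu1
      have hudN : u.den ≤ N := by
        have h2 := num_lt_den hx1
        have : (u.den : ℤ) < x.den := lt_of_le_of_lt hud h2
        omega
      obtain ⟨hB0, hB1, -, -⟩ := ih u hudN hu0 hu1.le
      have hp := pow4_pos n
      have hple := pow4_le hn2
      refine ⟨by rw [hfx]; nlinarith, by rw [hfx]; nlinarith, fun _ => by rw [hfx]; nlinarith,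
        fun h => absurd (h.trans_le hx2) (by norm_num)⟩
    · -- rule 2
      push_neg at hx2
      have heq := hf.2.2 x hx2 h1
      -- the v part
      have hv0 : 0 ≤ 1/x - 1 := by
        rw [sub_nonneg, le_div_iff₀ hx0]; linarith
      have hv1 : 1/x - 1 ≤ 1 := by
        rw [sub_le_iff_le_add, div_le_iff₀ hx0]; linarith
      have hvN : (1/x - 1).den ≤ N := by
        have := den_inv_sub_one_le hx0
        have := num_lt_den hx1
        omega
      obtain ⟨hv0', hv1', -, -⟩ := ih _ hvN hv0 hv1
      -- the w part, unfolded once more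
      have hw0 : 0 < 1 - x := by linarith
      have hw2 : 1 - x ≤ 1/2 := by linarith
      obtain ⟨m, u', hm2, hu0', hu1', hwe, hud'⟩ := decomp1 hw0 hw2
      have hfw : f (1 - x) = (4:ℝ) ^ (-m) * (1 - 2 * f u') := by
        rw [hwe]; exact eval1 hf m u' hm2 hu0' hu1'
      have hu'N : u'.den ≤ N := by
        have h2 : (1-x).num < ((1-x).den : ℤ) := num_lt_den (by linarith)
        have h3 := den_one_sub_le x
        omega
      obtain ⟨hC0, hC1, -, -⟩ := ih u' hu'N hu0' hu1'.le
      have hp := pow4_pos m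
      have hple := pow4_le hm2
      have hwB : 0 ≤ f (1 - x) ∧ f (1 - x) ≤ 1/16 := by
        constructor
        · rw [hfw]; nlinarith
        · rw [hfw]; nlinarith
      obtain ⟨hw1, hw2'⟩ := hwB
      refine ⟨by rw [heq]; linarith, by rw [heq]; linarith,
        fun h => absurd hx2 (not_lt.mpr h), fun _ => by rw [heq]; linarith⟩

lemma f_pos (hf : InterrobangEq f) {x : ℚ} (h0 : 0 < x) (h1 : x ≤ 1) : 0 < f x := by
  by_cases hx2 : x ≤ 1/2
  · obtain ⟨n, u, hn2, hu0, hu1, hxe, -⟩ := decomp1 h0 hx2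
    have hfx : f x = (4:ℝ) ^ (-n) * (1 - 2 * f u) := by
      rw [hxe]; exact eval1 hf n u hn2 hu0 hu1
    obtain ⟨-, hB1, -, -⟩ := f_bounds hf u hu0 hu1.le
    have hp := pow4_pos n
    rw [hfx]; nlinarith
  · push_neg at hx2
    obtain ⟨-, -, -, h4⟩ := f_bounds hf x h0.le h1
    linarith [h4 hx2]

lemma f_lt38 (hf : InterrobangEq f) {x : ℚ} (h0 : 0 ≤ x) (h1 : x < 1) : f x < 3/8 := by
  by_cases hx2 : x ≤ 1/2
  · obtain ⟨-, -, h3, -⟩ := f_bounds hf x h0 h1.le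
    linarith [h3 hx2]
  · push_neg at hx2
    have heq := hf.2.2 x hx2 h1.le
    have hw : 0 < f (1 - x) := f_pos hf (by linarith) (by linarith)
    obtain ⟨hv0', -, -, -⟩ := f_bounds hf (1/x - 1)
      (by rw [sub_nonneg, le_div_iff₀ (by linarith : (0:ℚ) < x)]; linarith)
      (by rw [sub_le_iff_le_add, div_le_iff₀ (by linarith : (0:ℚ) < x)]; linarith)
    rw [heq]; linarith

end

section
variable {f : ℚ → ℝ}

lemma f_nearone (hf : InterrobangEq f) (n : ℤ) (h3 : 3 ≤ n) :
    f (1 - 1/(n:ℚ)) = 3/8 - 3/4 * (4:ℝ)^(-(n-1)) - 1/2 * (4:ℝ)^(-n) := by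
  have hn : (3:ℚ) ≤ (n:ℚ) := by exact_mod_cast h3
  have hn0 : (0:ℚ) < (n:ℚ) := by linarith
  have h13 : 1/(n:ℚ) ≤ 1/3 := by
    rw [div_le_div_iff₀ hn0 (by norm_num)]; linarith
  have hx2 : 1/2 < 1 - 1/(n:ℚ) := by linarith
  have hx1 : 1 - 1/(n:ℚ) ≤ 1 := by
    have : 0 < 1/(n:ℚ) := by positivity
    linarith
  have heq := hf.2.2 _ hx2 hx1
  have hne : 1 - 1/(n:ℚ) ≠ 0 := by
    intro h; rw [sub_eq_zero] at h
    have : (n:ℚ) = 1 := by field_simp at h; linarith [h]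
    linarith
  have hn1 : (n:ℚ) - 1 ≠ 0 := by intro h; rw [sub_eq_zero] at h; linarith
  have e1 : 1/(1 - 1/(n:ℚ)) - 1 = 1/(((n-1:ℤ)):ℚ) := by
    push_cast
    field_simp
    ring
  have e2 : 1 - (1 - 1/(n:ℚ)) = 1/((n:ℤ):ℚ) := by push_cast; ring
  rw [e1, e2, f_unit hf (n-1) (by omega), f_unit hf n (by omega)] at heq
  exact heq

lemma f_halfseq (hf : InterrobangEq f) (m : ℤ) (hm : 2 ≤ m) :
    f (((m:ℚ)+1)/(2*m+1)) = 1/16 + 23/32 * (4:ℝ)^(-m) := by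
  have hm' : (2:ℚ) ≤ (m:ℚ) := by exact_mod_cast hm
  have h2m : (0:ℚ) < 2*(m:ℚ)+1 := by linarith
  have hm1 : (0:ℚ) < (m:ℚ)+1 := by linarith
  have hx2 : 1/2 < ((m:ℚ)+1)/(2*m+1) := by
    rw [div_lt_div_iff₀ (by norm_num) h2m]; linarith
  have hx1 : ((m:ℚ)+1)/(2*m+1) ≤ 1 := by
    rw [div_le_one h2m]; linarith
  have heq := hf.2.2 _ hx2 hx1
  have e1 : 1/(((m:ℚ)+1)/(2*m+1)) - 1 = 1 - 1/(((m+1:ℤ)):ℚ) := by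
    push_cast
    rw [one_div_div]
    rw [div_sub_one hm1.ne', sub_div' hm1.ne']
    ring_nf
  have e2 : 1 - ((m:ℚ)+1)/(2*m+1) = 1/(((2:ℤ):ℚ) + 1/(m:ℚ)) := by
    have hmm : (m:ℚ) ≠ 0 := by linarith
    field_simp
    ring
  rw [e1, e2, f_nearone hf (m+1) (by omega),
    eval1 hf 2 (1/(m:ℚ)) le_rfl (by positivity)
      (by rw [div_lt_one (by linarith)]; linarith),
    f_unit hf m hm] at heq
  have e3 : (4:ℝ)^(-(m+1-1)) = (4:ℝ)^(-m) := by norm_num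
  have e4 : (4:ℝ)^(-(m+1)) = (4:ℝ)^(-m) * (4:ℝ)^(-1:ℤ) := by
    rw [← zpow_add₀ (by norm_num : (4:ℝ) ≠ 0)]; ring_nf
  rw [e3, e4] at heq
  rw [heq]
  norm_num
  ring

lemma f_gt116 (hf : InterrobangEq f) {y : ℚ} (h2 : 1/2 < y) (h1 : y ≤ 1) : 1/16 < f y := by
  rcases eq_or_lt_of_le h1 with rfl | hy1
  · rw [f_one hf]; norm_num
  have heq := hf.2.2 y h2 h1
  have hy0 : (0:ℚ) < y := by linarith
  have hv0 : 0 ≤ 1/y - 1 := by rw [sub_nonneg, le_div_iff₀ hy0]; linarith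
  have hv1 : 1/y - 1 < 1 := by rw [sub_lt_iff_lt_add, div_lt_iff₀ hy0]; linarith
  have hfv := f_lt38 hf hv0 hv1
  obtain ⟨-, -, h3, -⟩ := f_bounds hf (1-y) (by linarith) (by linarith)
  have hfw := h3 (by linarith)
  rw [heq]; linarith

lemma f_strictMonoAux (hf : InterrobangEq f) :
    ∀ x y : ℚ, 0 ≤ x → y ≤ 1 → x < y → f x < f y := by
  suffices H : ∀ N : ℕ, ∀ x y : ℚ,
      2*(x.den + y.den) + ((if 1/2 < x then 1 else 0) + (if 1/2 < y then 1 else 0)) ≤ N →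
      0 ≤ x → y ≤ 1 → x < y → f x < f y by
    intro x y h0 h1 hxy; exact H _ x y le_rfl h0 h1 hxy
  intro N
  induction N with
  | zero =>
    intro x y hm
    have := x.pos; have := y.pos; omega
  | succ N ih =>
    intro x y hm h0 h1 hxy
    rcases h0.eq_or_lt with rfl | hx0
    · rw [hf.1]; exact f_pos hf hxy h1
    by_cases hy2 : y ≤ 1/2
    · -- Case B : 0 < x < y ≤ 1/2
      have hx2 : x < 1/2 := lt_of_lt_of_le hxy hy2
      obtain ⟨nx, ux, hnx2, hux0, hux1, hxe, huxd⟩ := decomp1 hx0 hx2.le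
      obtain ⟨ny, uy, hny2, huy0, huy1, hye, huyd⟩ := decomp1 (hx0.trans hxy) hy2
      have hax : (0:ℚ) < (nx:ℚ) + ux := by
        have : (2:ℚ) ≤ (nx:ℚ) := by exact_mod_cast hnx2
        linarith
      have hay : (0:ℚ) < (ny:ℚ) + uy := by
        have : (2:ℚ) ≤ (ny:ℚ) := by exact_mod_cast hny2
        linarith
      have hba : (ny:ℚ) + uy < (nx:ℚ) + ux := by
        rw [hxe, hye] at hxy
        exact lt_of_one_div_lt_one_div hax hxy
      have hfx : f x = (4:ℝ) ^ (-nx) * (1 - 2 * f ux) := by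
        rw [hxe]; exact eval1 hf nx ux hnx2 hux0 hux1
      have hfy : f y = (4:ℝ) ^ (-ny) * (1 - 2 * f uy) := by
        rw [hye]; exact eval1 hf ny uy hny2 huy0 huy1
      have hnyx : ny ≤ nx := by
        by_contra hcon
        push_neg at hcon
        have h1 : ((nx:ℚ)) + 1 ≤ (ny:ℚ) := by exact_mod_cast hcon
        linarith
      rcases eq_or_lt_of_le hnyx with rfl | hlt
      · -- same branch
        have huu : uy < ux := by linarith
        have hih : f uy < f ux := by
          apply ih uy ux ?_ huy0 hux1.le huu
          -- measure arithmetic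
          have d1 : (ux.den : ℤ) ≤ x.num := huxd
          have d2 : (uy.den : ℤ) ≤ y.num := huyd
          have d3 := two_num_lt_den hx2
          have d4 := two_num_le_den hy2
          have i1 : (if 1/2 < uy then 1 else 0) ≤ 1 := by split <;> omega
          have i2 : (if 1/2 < ux then 1 else 0) ≤ 1 := by split <;> omega
          have hx2' : ¬ (1/2 < x) := not_lt.mpr hx2.le
          have hy2' : ¬ (1/2 < y) := not_lt.mpr hy2
          rw [if_neg hx2', if_neg hy2'] at hm
          have := x.pos; have := y.pos
          have d5 : 0 < x.num := Rat.num_pos.mpr hx0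
          omega
        rw [hfx, hfy]
        have hp := pow4_pos ny
        nlinarith
      · -- different branches
        obtain ⟨hux0', hux38, -, -⟩ := f_bounds hf ux hux0 hux1.le
        have huy38 : f uy < 3/8 := f_lt38 hf huy0 huy1
        have hup : f x ≤ (4:ℝ)^(-nx) := by
          rw [hfx]
          have hp := pow4_pos nx
          nlinarith
        have hlow : (4:ℝ)^(-ny) * (1/4) < f y := by
          rw [hfy]
          have hp := pow4_pos ny
          nlinarith
        have hstep : (4:ℝ)^(-nx) ≤ (4:ℝ)^(-ny) * (1/4) := by
          have : (4:ℝ)^(-nx) ≤ (4:ℝ)^(-(ny+1)) := by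
            apply zpow_le_zpow_right₀ (by norm_num : (1:ℝ) ≤ 4)
            omega
          rw [show (-(ny+1)) = -ny + (-1) by ring, zpow_add₀ (by norm_num : (4:ℝ) ≠ 0)] at this
          norm_num at this ⊢
          linarith
        linarith
    · -- y > 1/2
      push_neg at hy2
      by_cases hx2 : x ≤ 1/2
      · -- Case C
        obtain ⟨-, -, h3, -⟩ := f_bounds hf x h0 (by linarith)
        have := f_gt116 hf hy2 h1
        linarith [h3 hx2]
      · -- Case D : 1/2 < x < y ≤ 1
        push_neg at hx2
        rcases eq_or_lt_of_le h1 with rfl | hy1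
        · rw [f_one hf]
          exact f_lt38 hf (by linarith) hxy
        have hx1 : x < 1 := hxy.trans hy1
        have hx0' : (0:ℚ) < x := by linarith
        have hy0' : (0:ℚ) < y := by linarith
        have heqx := hf.2.2 x hx2 hx1.le
        have heqy := hf.2.2 y hy2 h1
        -- v pair
        have hvy0 : 0 ≤ 1/y - 1 := by rw [sub_nonneg, le_div_iff₀ hy0']; linarith
        have hvx1 : 1/x - 1 ≤ 1 := by rw [sub_le_iff_le_add, div_le_iff₀ hx0']; linarith
        have hvv : 1/y - 1 < 1/x - 1 := by
          have := one_div_lt_one_div_of_lt hx0' hxy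
          linarith
        have hihv : f (1/y - 1) < f (1/x - 1) := by
          apply ih _ _ ?_ hvy0 hvx1 hvv
          have d1 : ((1/x - 1).den : ℤ) ≤ x.num := den_inv_sub_one_le hx0'
          have d2 : ((1/y - 1).den : ℤ) ≤ y.num := den_inv_sub_one_le hy0'
          have d3 := num_lt_den hx1
          have d4 := num_lt_den hy1
          have i1 : (if 1/2 < 1/y - 1 then 1 else 0) ≤ 1 := by split <;> omega
          have i2 : (if 1/2 < 1/x - 1 then 1 else 0) ≤ 1 := by split <;> omega
          rw [if_pos hx2, if_pos hy2] at hm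
          have := x.pos; have := y.pos
          have d5 : 0 < x.num := Rat.num_pos.mpr hx0'
          have d6 : 0 < y.num := Rat.num_pos.mpr hy0'
          omega
        -- w pair
        have hww : 1 - y < 1 - x := by linarith
        have hihw : f (1 - y) < f (1 - x) := by
          apply ih _ _ ?_ (by linarith) (by linarith) hww
          have d1 := den_one_sub_le x
          have d2 := den_one_sub_le y
          have i1 : ¬ (1/2 < 1 - y) := by push_neg; linarith
          have i2 : ¬ (1/2 < 1 - x) := by push_neg; linarith
          rw [if_pos hx2, if_pos hy2] at hm
          rw [if_neg i1, if_neg i2]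
          have := x.pos; have := y.pos
          omega
        rw [heqx, heqy]
        linarith

lemma f_mono (hf : InterrobangEq f) {x y : ℚ} (h0 : 0 ≤ x) (h1 : y ≤ 1) (hxy : x ≤ y) :
    f x ≤ f y := by
  rcases eq_or_lt_of_le hxy with rfl | h
  · exact le_refl _
  · exact (f_strictMonoAux hf x y h0 h1 h).le

end

/-! ### Jump machinery -/

noncomputable def LV (f : ℚ → ℝ) (z : ℝ) : ℝ := sSup (f '' {q : ℚ | 0 ≤ q ∧ (q:ℝ) < z})
noncomputable def UV (f : ℚ → ℝ) (z : ℝ) : ℝ := sInf (f '' {q : ℚ | z < (q:ℝ) ∧ q ≤ 1})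
noncomputable def JP (f : ℚ → ℝ) (z : ℝ) : ℝ := UV f z - LV f z
noncomputable def MJ (f : ℚ → ℝ) : ℝ := sSup (JP f '' Set.Ioo (0:ℝ) 1)

section
variable {f : ℚ → ℝ} {z : ℝ}

lemma lne (hz : 0 < z) : (f '' {q : ℚ | 0 ≤ q ∧ (q:ℝ) < z}).Nonempty :=
  ⟨f 0, ⟨0, ⟨le_rfl, by exact_mod_cast hz⟩, rfl⟩⟩

lemma une (hz : z < 1) : (f '' {q : ℚ | z < (q:ℝ) ∧ q ≤ 1}).Nonempty :=
  ⟨f 1, ⟨1, ⟨by exact_mod_cast hz, le_rfl⟩, rfl⟩⟩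

lemma lbdd (hf : InterrobangEq f) (hz : z ≤ 1) :
    BddAbove (f '' {q : ℚ | 0 ≤ q ∧ (q:ℝ) < z}) := by
  refine ⟨3/8, fun w hw => ?_⟩
  obtain ⟨q, ⟨hq0, hq1⟩, rfl⟩ := hw
  have hq1' : q ≤ 1 := by
    have : (q:ℝ) < 1 := lt_of_lt_of_le hq1 hz
    exact_mod_cast this.le
  exact (f_bounds hf q hq0 hq1').2.1

lemma ubdd (hf : InterrobangEq f) (hz : 0 ≤ z) :
    BddBelow (f '' {q : ℚ | z < (q:ℝ) ∧ q ≤ 1}) := by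
  refine ⟨0, fun w hw => ?_⟩
  obtain ⟨q, ⟨hq0, hq1⟩, rfl⟩ := hw
  have hq0' : 0 ≤ q := by
    have : (0:ℝ) ≤ (q:ℝ) := le_of_lt (lt_of_le_of_lt hz hq0)
    exact_mod_cast this
  exact (f_bounds hf q hq0' hq1).1

lemma JP_le (hf : InterrobangEq f) (hz0 : 0 < z) (hz1 : z < 1) {a b : ℚ}
    (ha0 : 0 ≤ a) (hb1 : b ≤ 1) (haz : (a:ℝ) < z) (hzb : z < (b:ℝ)) :
    JP f z ≤ f b - f a := by
  have h1 : UV f z ≤ f b := csInf_le (ubdd hf hz0.le) ⟨b, ⟨hzb, hb1⟩, rfl⟩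
  have h2 : f a ≤ LV f z := le_csSup (lbdd hf hz1.le) ⟨a, ⟨ha0, haz⟩, rfl⟩
  simp only [JP]; linarith

lemma JP_nonneg (hf : InterrobangEq f) (hz0 : 0 < z) (hz1 : z < 1) : 0 ≤ JP f z := by
  have : LV f z ≤ UV f z := by
    apply csSup_le (lne hz0)
    rintro w ⟨a, ⟨ha0, haz⟩, rfl⟩
    apply le_csInf (une hz1)
    rintro w' ⟨b, ⟨hzb, hb1⟩, rfl⟩
    have hab : a ≤ b := by
      have : (a:ℝ) < (b:ℝ) := haz.trans hzb
      exact_mod_cast this.le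
    exact f_mono hf ha0 hb1 hab
  simp only [JP]; linarith

lemma JP_le38 (hf : InterrobangEq f) (hz0 : 0 < z) (hz1 : z < 1) : JP f z ≤ 3/8 := by
  have := JP_le hf hz0 hz1 (le_refl (0:ℚ)) (le_refl (1:ℚ))
    (by exact_mod_cast hz0) (by exact_mod_cast hz1)
  rw [f_one hf, f_zero hf] at this
  linarith

lemma MJ_bdd (hf : InterrobangEq f) : BddAbove (JP f '' Set.Ioo (0:ℝ) 1) := by
  refine ⟨3/8, fun w hw => ?_⟩
  obtain ⟨u, ⟨h0, h1⟩, rfl⟩ := hw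
  exact JP_le38 hf h0 h1

lemma JP_le_MJ (hf : InterrobangEq f) (hz0 : 0 < z) (hz1 : z < 1) : JP f z ≤ MJ f :=
  le_csSup (MJ_bdd hf) ⟨z, ⟨hz0, hz1⟩, rfl⟩

lemma MJ_nonneg (hf : InterrobangEq f) : 0 ≤ MJ f :=
  le_trans (JP_nonneg hf (by norm_num : (0:ℝ) < 1/2) (by norm_num))
    (JP_le_MJ hf (by norm_num) (by norm_num))

/-- extraction of an almost-optimal enclosing pair, within a prescribed window -/
lemma JP_pair (hf : InterrobangEq f) (hz0 : 0 < z) (hz1 : z < 1)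
    {ε δ : ℝ} (hε : 0 < ε) (hδ : 0 < δ) :
    ∃ a b : ℚ, 0 ≤ a ∧ b ≤ 1 ∧ z - δ < (a:ℝ) ∧ (a:ℝ) < z ∧ z < (b:ℝ) ∧ (b:ℝ) < z + δ ∧
      f b - f a < JP f z + ε := by
  obtain ⟨w, ⟨a0, ⟨ha00, ha0z⟩, rfl⟩, hw⟩ :=
    exists_lt_of_lt_csSup (lne (f := f) hz0) (show LV f z - ε/2 < LV f z by linarith)
  obtain ⟨w', ⟨b0, ⟨hzb0, hb01⟩, rfl⟩, hw'⟩ :=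
    exists_lt_of_csInf_lt (une (f := f) hz1) (show UV f z < UV f z + ε/2 by linarith)
  obtain ⟨a, ha1, ha2⟩ := exists_rat_btwn (show max (a0:ℝ) (z - δ) < z by
    rw [max_lt_iff]; exact ⟨ha0z, by linarith⟩)
  obtain ⟨b, hb1, hb2⟩ := exists_rat_btwn (show z < min (b0:ℝ) (z + δ) by
    rw [lt_min_iff]; exact ⟨hzb0, by linarith⟩)
  rw [max_lt_iff] at ha1
  rw [lt_min_iff] at hb2
  have ha0 : 0 ≤ a := by
    have : (a0:ℝ) < (a:ℝ) := ha1.1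
    have h' : a0 ≤ a := by exact_mod_cast this.le
    linarith
  have hb1' : b ≤ 1 := by
    have : (b:ℝ) < (b0:ℝ) := hb2.1
    have h' : b ≤ b0 := by exact_mod_cast this.le
    linarith
  refine ⟨a, b, ha0, hb1', by linarith [ha1.2], ha2, hb1, hb2.2, ?_⟩
  have hfa : f a0 ≤ f a := by
    apply f_mono hf ha00 ?_ (by exact_mod_cast ha1.1.le)
    have : (a:ℝ) < 1 := ha2.trans hz1
    exact_mod_cast this.le
  have hfb : f b ≤ f b0 := by
    apply f_mono hf ?_ hb01 (by exact_mod_cast hb2.1.le)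
    have : (0:ℝ) < (b:ℝ) := hz0.trans hb1
    exact_mod_cast this.le
  have h3 : UV f z ≤ LV f z + JP f z := by simp only [JP]; linarith
  linarith

end

section
variable {f : ℚ → ℝ} {z : ℝ}

lemma exists_pow4 {ε : ℝ} (hε : 0 < ε) : ∃ m : ℤ, 3 ≤ m ∧ (4:ℝ)^(-m) < ε := by
  obtain ⟨k, hk⟩ := exists_pow_lt_of_lt_one hε (by norm_num : (1/4:ℝ) < 1)
  refine ⟨(k:ℤ) + 3, by omega, ?_⟩
  have h1 : (4:ℝ)^(-((k:ℤ)+3)) ≤ (4:ℝ)^(-(k:ℤ)) :=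
    zpow_le_zpow_right₀ (by norm_num) (by omega)
  have e : (4:ℝ)^(-(k:ℤ)) = (1/4:ℝ)^k := by
    rw [zpow_neg, zpow_natCast, one_div, inv_pow]
  rw [e] at h1
  exact lt_of_le_of_lt h1 hk

lemma JP_interior (hf : InterrobangEq f) {n : ℤ} (hn : 2 ≤ n)
    (hzl : 1/((n:ℝ)+1) < z) (hzu : z < 1/(n:ℝ)) :
    JP f z ≤ MJ f / 8 := by
  have hn2 : (2:ℝ) ≤ (n:ℝ) := by exact_mod_cast hn
  have hz0 : 0 < z := lt_trans (by positivity) hzl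
  have hz1 : z < 1 := by
    apply hzu.trans
    rw [div_lt_one (by linarith)]; linarith
  have hnz : (n:ℝ) < 1/z := by
    rw [lt_div_iff₀ hz0]
    rw [lt_div_iff₀ (by linarith : (0:ℝ) < (n:ℝ))] at hzu
    linarith
  have hnz1 : 1/z < (n:ℝ)+1 := by
    rw [div_lt_iff₀ hz0]
    rw [div_lt_iff₀ (by linarith : (0:ℝ) < (n:ℝ)+1)] at hzl
    linarith
  set z1 : ℝ := 1/z - (n:ℝ) with hz1def
  have hz10 : 0 < z1 := by simp only [hz1def]; linarith
  have hz11 : z1 < 1 := by simp only [hz1def]; linarith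
  apply le_of_forall_pos_le_add
  intro ε hε
  have hδ : 0 < min z1 (1 - z1) := by
    rw [lt_min_iff]; exact ⟨hz10, by linarith⟩
  obtain ⟨a, b, ha0, hb1, haw, haz, hzb, hbw, hfab⟩ :=
    JP_pair hf hz10 hz11 hε hδ
  have ha0' : 0 < a := by
    have : z1 - min z1 (1 - z1) ≥ 0 := by
      have := min_le_left z1 (1 - z1); linarith
    have : (0:ℝ) < (a:ℝ) := by linarith
    exact_mod_cast this
  have hb1' : b < 1 := by
    have : z1 + min z1 (1 - z1) ≤ 1 := by
      have := min_le_right z1 (1 - z1); linarith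
    have : (b:ℝ) < 1 := by linarith
    exact_mod_cast this
  -- the transported pair
  set A : ℚ := 1/((n:ℚ) + b) with hA
  set B : ℚ := 1/((n:ℚ) + a) with hB
  have hnb : (0:ℚ) < (n:ℚ) + b := by
    have h1 : (2:ℚ) ≤ (n:ℚ) := by exact_mod_cast hn
    have h2 : (0:ℝ) ≤ (b:ℝ) := by linarith
    have h2' : (0:ℚ) ≤ b := by exact_mod_cast h2
    linarith
  have hna : (0:ℚ) < (n:ℚ) + a := by
    have h1 : (2:ℚ) ≤ (n:ℚ) := by exact_mod_cast hn
    linarith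
  have hfA : f A = (4:ℝ)^(-n) * (1 - 2 * f b) := by
    rw [hA]
    apply eval1 hf n b hn ?_ hb1'
    have h2 : (0:ℝ) ≤ (b:ℝ) := by linarith
    exact_mod_cast h2
  have hfB : f B = (4:ℝ)^(-n) * (1 - 2 * f a) := by
    rw [hB]
    exact eval1 hf n a hn ha0 (by exact_mod_cast (show (a:ℝ) < 1 by linarith))
  have hAz : (A:ℝ) < z := by
    have hc : (A:ℝ) = 1/((n:ℝ) + (b:ℝ)) := by rw [hA]; push_cast; ring
    rw [hc]
    have h1 : 1/z < (n:ℝ) + (b:ℝ) := by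
      have : z1 < (b:ℝ) := hzb
      simp only [hz1def] at this; linarith
    have h2 := one_div_lt_one_div_of_lt (by positivity : (0:ℝ) < 1/z) h1
    rwa [one_div_one_div] at h2
  have hzB : z < (B:ℝ) := by
    have hc : (B:ℝ) = 1/((n:ℝ) + (a:ℝ)) := by rw [hB]; push_cast; ring
    rw [hc]
    have h1 : (n:ℝ) + (a:ℝ) < 1/z := by
      have : (a:ℝ) < z1 := haz
      simp only [hz1def] at this; linarith
    have hna' : (0:ℝ) < (n:ℝ) + (a:ℝ) := by
      have : (0:ℝ) ≤ (a:ℝ) := by exact_mod_cast ha0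
      linarith
    have h2 := one_div_lt_one_div_of_lt hna' h1
    rwa [one_div_one_div] at h2
  have hA0 : 0 ≤ A := by rw [hA]; positivity
  have hB1 : B ≤ 1 := by
    rw [hB]
    rw [div_le_one hna]
    have h1 : (2:ℚ) ≤ (n:ℚ) := by exact_mod_cast hn
    linarith
  have hkey := JP_le hf hz0 hz1 hA0 hB1 hAz hzB
  have hdiff : f B - f A = 2 * (4:ℝ)^(-n) * (f b - f a) := by
    rw [hfA, hfB]; ring
  have hJPz1 : JP f z1 ≤ MJ f := JP_le_MJ hf hz10 hz11
  have hp := pow4_pos n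
  have hple := pow4_le hn
  have hM0 := MJ_nonneg hf
  calc JP f z ≤ f B - f A := hkey
    _ = 2 * (4:ℝ)^(-n) * (f b - f a) := hdiff
    _ ≤ 2 * (4:ℝ)^(-n) * (MJ f + ε) := by nlinarith [mul_le_mul_of_nonneg_left (show f b - f a ≤ MJ f + ε by linarith) (show (0:ℝ) ≤ 2 * (4:ℝ)^(-n) by positivity)]
    _ ≤ MJ f / 8 + ε := by nlinarith [mul_le_mul_of_nonneg_right hple hM0, mul_le_mul_of_nonneg_right hple hε.le]

end

section
variable {f : ℚ → ℝ}

lemma JP_unit (hf : InterrobangEq f) {n : ℤ} (hn : 2 ≤ n) :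
    JP f (((1/(n:ℚ) : ℚ)):ℝ) ≤ 0 := by
  have hnQ : (2:ℚ) ≤ (n:ℚ) := by exact_mod_cast hn
  have hn0 : (0:ℚ) < (n:ℚ) := by linarith
  set zq : ℚ := 1/(n:ℚ) with hzq
  have hz0 : (0:ℝ) < (zq:ℝ) := by
    have : (0:ℚ) < zq := by rw [hzq]; positivity
    exact_mod_cast this
  have hz1 : (zq:ℝ) < 1 := by
    have : zq < 1 := by rw [hzq, div_lt_one hn0]; linarith
    exact_mod_cast this
  apply le_of_forall_pos_le_add
  intro ε hε
  obtain ⟨m, hm3, hmε⟩ := exists_pow4 (show (0:ℝ) < ε/9 by linarith)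
  have hmQ : (3:ℚ) ≤ (m:ℚ) := by exact_mod_cast hm3
  have hm0 : (0:ℚ) < (m:ℚ) := by linarith
  have hminv : (0:ℚ) < 1/(m:ℚ) := by positivity
  have hminv1 : 1/(m:ℚ) < 1 := by rw [div_lt_one hm0]; linarith
  have hpm := pow4_pos m
  -- left point a
  set a : ℚ := 1/((n:ℚ) + 1/(m:ℚ)) with ha
  have hfa : f a = (4:ℝ)^(-n) * (1 - 2 * f (1/(m:ℚ))) := by
    rw [ha]; exact eval1 hf n _ hn hminv.le hminv1
  have hfm : f (1/(m:ℚ)) = (4:ℝ)^(-m) := f_unit hf m (by omega)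
  have hfzq : f zq = (4:ℝ)^(-n) := f_unit hf n hn
  have hdiffa : f zq - f a = 2 * (4:ℝ)^(-n) * (4:ℝ)^(-m) := by
    rw [hfa, hfm, hfzq]; ring
  have haz : (a:ℝ) < (zq:ℝ) := by
    have : a < zq := by
      rw [ha, hzq]
      exact one_div_lt_one_div_of_lt hn0 (by linarith)
    exact_mod_cast this
  have ha0 : 0 ≤ a := by
    rw [ha]; positivity
  have hple := pow4_le hn
  have hbnd_a : f zq - f a ≤ (4:ℝ)^(-m) / 8 := by
    rw [hdiffa]
    nlinarith
  -- right point b, two cases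
  have hright : ∃ b : ℚ, b ≤ 1 ∧ (zq:ℝ) < (b:ℝ) ∧ f b - f zq ≤ 2 * (4:ℝ)^(-m) := by
    rcases eq_or_lt_of_le hn with rfl | hn3
    · -- n = 2
      refine ⟨((m:ℚ)+1)/(2*m+1), ?_, ?_, ?_⟩
      · rw [div_le_one (by linarith)]; linarith
      · have : zq < ((m:ℚ)+1)/(2*m+1) := by
          rw [hzq, div_lt_div_iff₀ (by norm_num) (by linarith)]
          push_cast
          linarith
        exact_mod_cast this
      · rw [f_halfseq hf m (by omega), hfzq]
        have e : ((4:ℝ)^(-(2:ℤ))) = 1/16 := by norm_num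
        rw [e]
        linarith
    · -- n ≥ 3
      have hn1 : (2:ℤ) ≤ n - 1 := by omega
      have hn1Q : (3:ℚ) ≤ (n:ℚ) := by exact_mod_cast hn3
      have hu0 : (0:ℚ) ≤ 1 - 1/(m:ℚ) := by linarith
      have hu1 : 1 - 1/(m:ℚ) < 1 := by linarith
      refine ⟨1/(((n-1:ℤ):ℚ) + (1 - 1/(m:ℚ))), ?_, ?_, ?_⟩
      · rw [div_le_one (by push_cast; linarith)]
        push_cast
        linarith
      · have : zq < 1/(((n-1:ℤ):ℚ) + (1 - 1/(m:ℚ))) := by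
          rw [hzq]
          apply one_div_lt_one_div_of_lt
          · push_cast; linarith
          · push_cast; linarith
        exact_mod_cast this
      · rw [eval1 hf (n-1) _ hn1 hu0 hu1, f_nearone hf m hm3, hfzq]
        have e1 : (4:ℝ)^(-(n-1)) = (4:ℝ)^(-n) * 4 := by
          rw [show -(n-1) = -n + 1 by ring, zpow_add₀ (by norm_num : (4:ℝ) ≠ 0)]
          norm_num
        have e2 : (4:ℝ)^(-(m-1)) = (4:ℝ)^(-m) * 4 := by
          rw [show -(m-1) = -m + 1 by ring, zpow_add₀ (by norm_num : (4:ℝ) ≠ 0)]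
          norm_num
        rw [e1, e2]
        have hplen := pow4_le hn
        have hpn := pow4_pos n
        nlinarith [mul_le_mul_of_nonneg_right hplen hpm.le, mul_pos hpn hpm]
  obtain ⟨b, hb1, hzb, hbnd_b⟩ := hright
  have hkey := JP_le hf hz0 hz1 ha0 hb1 haz hzb
  have : (4:ℝ)^(-m) < ε/9 := hmε
  linarith

lemma JP_left (hf : InterrobangEq f) {z : ℝ} (hz0 : 0 < z) (hz2 : z ≤ 1/2) :
    JP f z ≤ MJ f / 8 := by
  set n : ℤ := ⌊1/z⌋ with hn
  have h2z : (2:ℝ) ≤ 1/z := by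
    rw [le_div_iff₀ hz0]; linarith
  have hn2 : 2 ≤ n := by
    rw [hn, Int.le_floor]; exact_mod_cast h2z
  have hfl : ((n:ℝ)) ≤ 1/z := Int.floor_le _
  have hfu : 1/z < (n:ℝ) + 1 := by
    rw [hn]; push_cast; exact_mod_cast Int.lt_floor_add_one (1/z)
  have hnR : (0:ℝ) < (n:ℝ) := by
    have : (0:ℤ) < n := by omega
    exact_mod_cast this
  rcases eq_or_lt_of_le hfl with heq | hlt
  · -- z = 1/n exactly
    have hzn : z = 1/((n:ℝ)) := by rw [heq, one_div_one_div]
    have hc : ((1/(n:ℚ):ℚ):ℝ) = 1/((n:ℝ)) := by push_cast; ring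
    rw [hzn, ← hc]
    exact le_trans (JP_unit hf hn2) (by linarith [MJ_nonneg hf])
  · -- interior
    apply JP_interior hf hn2
    · have h := one_div_lt_one_div_of_lt (by positivity : (0:ℝ) < 1/z) hfu
      rwa [one_div_one_div] at h
    · have h := one_div_lt_one_div_of_lt hnR hlt
      rwa [one_div_one_div] at h

end

section
variable {f : ℚ → ℝ}

lemma JP_right (hf : InterrobangEq f) {z : ℝ} (h2 : 1/2 < z) (hz1 : z < 1) :
    JP f z ≤ 13/16 * MJ f := by
  have hz0 : (0:ℝ) < z := by linarith
  have hzinv1 : 1 < 1/z := by rw [lt_div_iff₀ hz0]; linarith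
  have hzinv2 : 1/z < 2 := by rw [div_lt_iff₀ hz0]; linarith
  set z1 : ℝ := 1/z - 1 with hz1def
  set zw : ℝ := 1 - z with hzwdef
  have hz10 : 0 < z1 := by simp only [hz1def]; linarith
  have hz11 : z1 < 1 := by simp only [hz1def]; linarith
  have hzw0 : 0 < zw := by simp only [hzwdef]; linarith
  have hzw2 : zw < 1/2 := by simp only [hzwdef]; linarith
  have hM0 := MJ_nonneg hf
  have hJz1 : JP f z1 ≤ MJ f := JP_le_MJ hf hz10 hz11
  have hJzw : JP f zw ≤ MJ f / 8 := JP_left hf hzw0 hzw2.le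
  apply le_of_forall_pos_le_add
  intro ε hε
  have hε2 : 0 < ε/2 := by linarith
  have hδv : 0 < min z1 (1 - z1) := lt_min hz10 (by linarith)
  have hδw : 0 < min zw (1/2 - zw) := lt_min hzw0 (by linarith)
  obtain ⟨p, q, hp0, hq1, hpw, hpz, hzq, hqw, hfpq⟩ := JP_pair hf hz10 hz11 hε2 hδv
  obtain ⟨r, s, hr0, hs1, hrw, hrz, hzs, hsw, hfrs⟩ := JP_pair hf hzw0 (by linarith) hε2 hδw
  -- strictness of window endpoints
  have hp0' : (0:ℝ) < (p:ℝ) := by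
    have := min_le_left z1 (1 - z1); linarith
  have hq1' : (q:ℝ) < 1 := by
    have := min_le_right z1 (1 - z1); linarith
  have hr0' : (0:ℝ) < (r:ℝ) := by
    have := min_le_left zw (1/2 - zw); linarith
  have hs2' : (s:ℝ) < 1/2 := by
    have := min_le_right zw (1/2 - zw); linarith
  have hq1Q : q < 1 := by exact_mod_cast hq1'
  have hp0Q : 0 < p := by exact_mod_cast hp0'
  have hr0Q : 0 < r := by exact_mod_cast hr0'
  have hs2Q : s < 1/2 := by
    have : (s:ℝ) < ((1/2:ℚ):ℝ) := by push_cast; linarith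
    exact_mod_cast this
  have h1q : (0:ℚ) < 1 + q := by
    have : (0:ℝ) < (q:ℝ) := hp0'.trans (by exact_mod_cast hpz.trans hzq)
    have hq : (0:ℚ) < q := by exact_mod_cast this
    linarith
  have h1p : (0:ℚ) < 1 + p := by linarith
  -- the pair around z
  set a : ℚ := max (1/(1+q)) (1 - s) with ha
  set b : ℚ := min (1/(1+p)) (1 - r) with hb
  have hAz : ((1/(1+q) : ℚ):ℝ) < z := by
    have hc : ((1/(1+q) : ℚ):ℝ) = 1/(1+(q:ℝ)) := by push_cast; ring
    rw [hc]
    have h1 : 1/z < 1 + (q:ℝ) := by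
      have : z1 < (q:ℝ) := hzq
      simp only [hz1def] at this; linarith
    have h := one_div_lt_one_div_of_lt (by positivity : (0:ℝ) < 1/z) h1
    rwa [one_div_one_div] at h
  have hAz2 : ((1 - s : ℚ):ℝ) < z := by
    push_cast
    have : zw < (s:ℝ) := hzs
    simp only [hzwdef] at this; linarith
  have hzB : z < ((1/(1+p) : ℚ):ℝ) := by
    have hc : ((1/(1+p) : ℚ):ℝ) = 1/(1+(p:ℝ)) := by push_cast; ring
    rw [hc]
    have h1 : 1 + (p:ℝ) < 1/z := by
      have : (p:ℝ) < z1 := hpz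
      simp only [hz1def] at this; linarith
    have h := one_div_lt_one_div_of_lt (by push_cast; linarith : (0:ℝ) < 1+(p:ℝ)) h1
    rwa [one_div_one_div] at h
  have hzB2 : z < ((1 - r : ℚ):ℝ) := by
    push_cast
    have : (r:ℝ) < zw := hrz
    simp only [hzwdef] at this; linarith
  have haz : (a:ℝ) < z := by
    rw [ha, Rat.cast_max, max_lt_iff]
    exact ⟨hAz, hAz2⟩
  have hzb : z < (b:ℝ) := by
    rw [hb, Rat.cast_min, lt_min_iff]
    exact ⟨hzB, hzB2⟩
  have hab : a < b := by
    have : (a:ℝ) < (b:ℝ) := haz.trans hzb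
    exact_mod_cast this
  have ha2 : 1/2 < a := by
    rw [ha, lt_max_iff]
    left
    rw [div_lt_div_iff₀ (by norm_num) h1q]
    linarith
  have hb1 : b ≤ 1 := by
    rw [hb]
    apply le_trans (min_le_left _ _)
    rw [div_le_one h1p]
    linarith
  have hb2 : 1/2 < b := lt_trans ha2 hab
  have ha1 : a ≤ 1 := le_of_lt (lt_of_lt_of_le hab hb1)
  have ha0 : (0:ℚ) < a := by linarith
  have hb0 : (0:ℚ) < b := by linarith
  have heqa := hf.2.2 a ha2 ha1
  have heqb := hf.2.2 b hb2 hb1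
  -- compare v-parts
  have hva : 1/a - 1 ≤ q := by
    have h1 : 1/(1+q) ≤ a := by rw [ha]; exact le_max_left _ _
    have h2 := one_div_le_one_div_of_le (by positivity : (0:ℚ) < 1/(1+q)) h1
    rw [one_div_one_div] at h2
    linarith
  have hvb : p ≤ 1/b - 1 := by
    have h1 : b ≤ 1/(1+p) := by rw [hb]; exact min_le_left _ _
    have h2 := one_div_le_one_div_of_le hb0 h1
    rw [one_div_one_div] at h2
    linarith
  have hfva : f (1/a - 1) ≤ f q := by
    apply f_mono hf ?_ hq1Q.le hva
    rw [sub_nonneg, le_div_iff₀ ha0]; linarith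
  have hfvb : f p ≤ f (1/b - 1) := by
    apply f_mono hf hp0Q.le ?_ hvb
    rw [sub_le_iff_le_add, div_le_iff₀ hb0]; linarith
  -- compare w-parts
  have hfwa : f (1 - a) ≤ f s := by
    have h1 : 1 - s ≤ a := by rw [ha]; exact le_max_right _ _
    exact f_mono hf (by linarith) hs1 (by linarith)
  have hfwb : f r ≤ f (1 - b) := by
    have h1 : b ≤ 1 - r := by rw [hb]; exact min_le_right _ _
    exact f_mono hf hr0Q.le (by linarith) (by linarith)
  have hkey := JP_le hf hz0 hz1 ha0.le hb1 haz hzb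
  rw [heqa, heqb] at hkey
  linarith

lemma MJ_zero (hf : InterrobangEq f) : MJ f = 0 := by
  have h1 : MJ f ≤ 13/16 * MJ f := by
    apply csSup_le
    · exact Set.Nonempty.image _ (Set.nonempty_Ioo.mpr (by norm_num : (0:ℝ) < 1))
    · rintro w ⟨u, ⟨h0, hu1⟩, rfl⟩
      by_cases hc : u ≤ 1/2
      · linarith [JP_left hf h0 hc, MJ_nonneg hf]
      · push_neg at hc
        exact JP_right hf hc hu1
  have := MJ_nonneg hf
  linarith

lemma JP_zero (hf : InterrobangEq f) {z : ℝ} (hz0 : 0 < z) (hz1 : z < 1) : JP f z = 0 :=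
  le_antisymm (le_trans (JP_le_MJ hf hz0 hz1) (le_of_eq (MJ_zero hf)))
    (JP_nonneg hf hz0 hz1)

/-- the no-jump statement for interior points -/
lemma no_jump (hf : InterrobangEq f) {z : ℝ} (hz0 : 0 < z) (hz1 : z < 1)
    {ε : ℝ} (hε : 0 < ε) :
    ∃ a b : ℚ, 0 ≤ a ∧ b ≤ 1 ∧ (a:ℝ) < z ∧ z < (b:ℝ) ∧ f b - f a < ε := by
  obtain ⟨a, b, h1, h2, -, h4, h5, -, h7⟩ := JP_pair hf hz0 hz1 hε one_pos
  rw [JP_zero hf hz0 hz1] at h7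
  exact ⟨a, b, h1, h2, h4, h5, by linarith⟩

end

section
variable {f : ℚ → ℝ}

lemma nj0 (hf : InterrobangEq f) {ε : ℝ} (hε : 0 < ε) :
    ∃ b : ℚ, 0 < b ∧ b ≤ 1 ∧ f b < ε := by
  obtain ⟨m, hm3, hmε⟩ := exists_pow4 hε
  have hmQ : (3:ℚ) ≤ (m:ℚ) := by exact_mod_cast hm3
  refine ⟨1/(m:ℚ), by positivity, ?_, ?_⟩
  · rw [div_le_one (by linarith)]; linarith
  · rw [f_unit hf m (by omega)]; exact hmε

lemma nj1 (hf : InterrobangEq f) {ε : ℝ} (hε : 0 < ε) :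
    ∃ a : ℚ, 0 ≤ a ∧ a < 1 ∧ 3/8 - f a < ε := by
  obtain ⟨m, hm3, hmε⟩ := exists_pow4 (show (0:ℝ) < ε/8 by linarith)
  have hmQ : (3:ℚ) ≤ (m:ℚ) := by exact_mod_cast hm3
  have hm0 : (0:ℚ) < (m:ℚ) := by linarith
  have h1m : 1/(m:ℚ) ≤ 1/3 := by
    rw [div_le_div_iff₀ hm0 (by norm_num)]; linarith
  have h1m0 : (0:ℚ) < 1/(m:ℚ) := by positivity
  refine ⟨1 - 1/(m:ℚ), by linarith, by linarith, ?_⟩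
  rw [f_nearone hf m hm3]
  have e2 : (4:ℝ)^(-(m-1)) = (4:ℝ)^(-m) * 4 := by
    rw [show -(m-1) = -m + 1 by ring, zpow_add₀ (by norm_num : (4:ℝ) ≠ 0)]
    norm_num
  rw [e2]
  have hpm := pow4_pos m
  linarith

end

/-! ### The extension -/

noncomputable def gext (f : ℚ → ℝ) : ℝ → ℝ :=
  fun z => sSup (f '' {q : ℚ | 0 ≤ q ∧ q ≤ 1 ∧ (q:ℝ) ≤ z})

section
variable {f : ℚ → ℝ} {z : ℝ}

lemma gne (hz : 0 ≤ z) : (f '' {q : ℚ | 0 ≤ q ∧ q ≤ 1 ∧ (q:ℝ) ≤ z}).Nonempty :=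
  ⟨f 0, ⟨0, ⟨le_rfl, by norm_num, by exact_mod_cast hz⟩, rfl⟩⟩

lemma gbdd (hf : InterrobangEq f) :
    BddAbove (f '' {q : ℚ | 0 ≤ q ∧ q ≤ 1 ∧ (q:ℝ) ≤ z}) := by
  refine ⟨3/8, fun w hw => ?_⟩
  obtain ⟨q, ⟨h0, h1, -⟩, rfl⟩ := hw
  exact (f_bounds hf q h0 h1).2.1

lemma g_ge (hf : InterrobangEq f) {a : ℚ} (h0 : 0 ≤ a) (h1 : a ≤ 1) (h2 : (a:ℝ) ≤ z) :
    f a ≤ gext f z :=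
  le_csSup (gbdd hf) ⟨a, ⟨h0, h1, h2⟩, rfl⟩

lemma g_le (hf : InterrobangEq f) {b : ℚ} (hb0 : 0 ≤ b) (hb1 : b ≤ 1) (hz0 : 0 ≤ z)
    (h : ∀ q : ℚ, 0 ≤ q → q ≤ 1 → (q:ℝ) ≤ z → q ≤ b) : gext f z ≤ f b := by
  apply csSup_le (gne hz0)
  rintro w ⟨q, ⟨h0, h1, h2⟩, rfl⟩
  exact f_mono hf h0 hb1 (h q h0 h1 h2)

lemma g_rat (hf : InterrobangEq f) {q : ℚ} (h0 : 0 ≤ q) (h1 : q ≤ 1) :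
    gext f (q:ℝ) = f q := by
  apply le_antisymm
  · apply g_le hf h0 h1 (by exact_mod_cast h0)
    intro p _ _ hp
    exact_mod_cast hp
  · exact g_ge hf h0 h1 le_rfl

lemma g_mono (hf : InterrobangEq f) {w : ℝ} (hz : 0 ≤ z) (hzw : z ≤ w) :
    gext f z ≤ gext f w := by
  apply csSup_le_csSup (gbdd hf) (gne hz)
  rintro u ⟨q, ⟨h0, h1, h2⟩, rfl⟩
  exact ⟨q, ⟨h0, h1, h2.trans hzw⟩, rfl⟩

lemma g_cont (hf : InterrobangEq f) : ContinuousOn (gext f) (Set.Icc (0:ℝ) 1) := by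
  intro z hz
  obtain ⟨hz0, hz1⟩ := hz
  rw [Metric.continuousWithinAt_iff]
  intro ε hε
  rcases eq_or_lt_of_le hz0 with rfl | hz0'
  · -- z = 0
    obtain ⟨b, hb0, hb1, hbε⟩ := nj0 hf hε
    have hb0R : (0:ℝ) < (b:ℝ) := by exact_mod_cast hb0
    refine ⟨(b:ℝ), hb0R, fun y hy hyd => ?_⟩
    obtain ⟨hy0, hy1⟩ := hy
    rw [Real.dist_eq] at hyd
    have hyb : y < (b:ℝ) := by
      rw [abs_lt] at hyd; linarith [hyd.2]
    have h1 : gext f y ≤ f b := by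
      apply g_le hf hb0.le hb1 hy0
      intro q _ _ hq
      have : (q:ℝ) < (b:ℝ) := lt_of_le_of_lt hq hyb
      exact_mod_cast this.le
    have h2 : (0:ℝ) ≤ gext f y := by
      have := g_ge hf (le_refl (0:ℚ)) (by norm_num) (by exact_mod_cast hy0)
      rwa [f_zero hf] at this
    have hg0 : gext f (0:ℝ) = 0 := by
      have := g_rat hf (le_refl (0:ℚ)) (by norm_num)
      rw [f_zero hf] at this
      exact_mod_cast this
    rw [hg0, Real.dist_eq]
    rw [abs_lt]
    constructor <;> linarith
  rcases eq_or_lt_of_le hz1 with rfl | hz1'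
  · -- z = 1
    obtain ⟨a, ha0, ha1, haε⟩ := nj1 hf hε
    have ha1R : (a:ℝ) < 1 := by exact_mod_cast ha1
    refine ⟨1 - (a:ℝ), by linarith, fun y hy hyd => ?_⟩
    obtain ⟨hy0, hy1⟩ := hy
    rw [Real.dist_eq, abs_lt] at hyd
    have hay : (a:ℝ) < y := by linarith [hyd.1]
    have h1 : f a ≤ gext f y := g_ge hf ha0 ha1.le hay.le
    have h2 : gext f y ≤ f 1 := by
      apply g_le hf (by norm_num) (le_refl (1:ℚ)) hy0
      intro q _ hq1 _
      exact hq1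
    have hg1 : gext f (1:ℝ) = f 1 := by
      have := g_rat hf (by norm_num : (0:ℚ) ≤ 1) (le_refl (1:ℚ))
      exact_mod_cast this
    have hf1 : f 1 = 3/8 := f_one hf
    rw [hg1, Real.dist_eq, abs_lt]
    constructor <;> linarith
  · -- interior
    obtain ⟨a, b, ha0, hb1, haz, hzb, hab⟩ := no_jump hf hz0' hz1' hε
    refine ⟨min (z - (a:ℝ)) ((b:ℝ) - z), lt_min (by linarith) (by linarith),
      fun y hy hyd => ?_⟩
    obtain ⟨hy0, hy1⟩ := hy
    rw [Real.dist_eq, abs_lt] at hyd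
    have h1 := min_le_left (z - (a:ℝ)) ((b:ℝ) - z)
    have h2 := min_le_right (z - (a:ℝ)) ((b:ℝ) - z)
    have hay : (a:ℝ) < y := by linarith [hyd.1]
    have hyb : y < (b:ℝ) := by linarith [hyd.2]
    have ha1 : a ≤ 1 := by
      have : (a:ℝ) < 1 := haz.trans hz1'
      exact_mod_cast this.le
    have hb0 : 0 ≤ b := by
      have : (0:ℝ) < (b:ℝ) := hz0'.trans hzb
      exact_mod_cast this.le
    have key : ∀ w : ℝ, 0 ≤ w → (a:ℝ) < w → w < (b:ℝ) →
        f a ≤ gext f w ∧ gext f w ≤ f b := by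
      intro w hw0 haw hwb
      constructor
      · exact g_ge hf ha0 ha1 haw.le
      · apply g_le hf hb0 hb1 hw0
        intro q _ _ hq
        have : (q:ℝ) < (b:ℝ) := lt_of_le_of_lt hq hwb
        exact_mod_cast this.le
    obtain ⟨k1, k2⟩ := key y hy0 hay hyb
    obtain ⟨k3, k4⟩ := key z hz0'.le haz hzb
    rw [Real.dist_eq, abs_lt]
    constructor <;> linarith

lemma g_strictMono (hf : InterrobangEq f) : StrictMonoOn (gext f) (Set.Icc (0:ℝ) 1) := by
  intro x hx y hy hxy
  obtain ⟨p, hp1, hp2⟩ := exists_rat_btwn hxy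
  obtain ⟨q, hq1, hq2⟩ := exists_rat_btwn hp2
  have hp0 : 0 ≤ p := by
    have : (0:ℝ) ≤ (p:ℝ) := le_trans hx.1 hp1.le
    exact_mod_cast this
  have hq1' : q ≤ 1 := by
    have : (q:ℝ) ≤ 1 := le_trans hq2.le hy.2
    exact_mod_cast this
  have hpq : p < q := by exact_mod_cast hq1
  have h1 : gext f x ≤ f p := by
    apply g_le hf hp0 (le_trans hpq.le hq1') hx.1
    intro r _ _ hr
    have : (r:ℝ) < (p:ℝ) := lt_of_le_of_lt hr hp1
    exact_mod_cast this.le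
  have h2 : f p < f q := f_strictMonoAux hf p q hp0 hq1' hpq
  have h3 : f q ≤ gext f y := g_ge hf (by exact_mod_cast le_trans hp0 hpq.le) hq1' hq2.le
  linarith

end
end Interrobang

open Interrobang in
theorem interrobang_uniformContinuous_and_extends (f : ℚ → ℝ) (hf : InterrobangEq f) :
    UniformContinuousOn f (Set.Icc (0:ℚ) 1) ∧
    ∃ g : ℝ → ℝ,
      (ContinuousOn g (Set.Icc (0:ℝ) 1) ∧ StrictMonoOn g (Set.Icc (0:ℝ) 1) ∧
        ∀ q : ℚ, q ∈ Set.Icc (0:ℚ) 1 → g (q : ℝ) = f q) ∧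
      ∀ g' : ℝ → ℝ,
        (ContinuousOn g' (Set.Icc (0:ℝ) 1) ∧ StrictMonoOn g' (Set.Icc (0:ℝ) 1) ∧
          ∀ q : ℚ, q ∈ Set.Icc (0:ℚ) 1 → g' (q : ℝ) = f q) →
        Set.EqOn g g' (Set.Icc (0:ℝ) 1) := by
  have hgc := g_cont hf
  have hgm := g_strictMono hf
  have hgr : ∀ q : ℚ, q ∈ Set.Icc (0:ℚ) 1 → gext f (q:ℝ) = f q :=
    fun q hq => g_rat hf hq.1 hq.2
  constructor
  · -- uniform continuity of f
    have hUC : UniformContinuousOn (gext f) (Set.Icc (0:ℝ) 1) :=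
      isCompact_Icc.uniformContinuousOn_of_continuous hgc
    rw [Metric.uniformContinuousOn_iff] at hUC ⊢
    intro ε hε
    obtain ⟨δ, hδ, H⟩ := hUC ε hε
    refine ⟨δ, hδ, fun x hx y hy hd => ?_⟩
    have hx' : (x:ℝ) ∈ Set.Icc (0:ℝ) 1 :=
      ⟨by exact_mod_cast hx.1, by exact_mod_cast hx.2⟩
    have hy' : (y:ℝ) ∈ Set.Icc (0:ℝ) 1 :=
      ⟨by exact_mod_cast hy.1, by exact_mod_cast hy.2⟩
    have hdr : dist ((x:ℚ):ℝ) ((y:ℚ):ℝ) < δ := by rw [Rat.dist_cast]; exact hd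
    have := H _ hx' _ hy' hdr
    rwa [g_rat hf hx.1 hx.2, g_rat hf hy.1 hy.2] at this
  · refine ⟨gext f, ⟨hgc, hgm, hgr⟩, ?_⟩
    rintro g' ⟨hg'c, -, hg'r⟩
    have hsub : (fun q : ℚ => (q:ℝ)) '' {q : ℚ | 0 ≤ q ∧ q ≤ 1} ⊆ Set.Icc (0:ℝ) 1 := by
      rintro w ⟨q, ⟨h0, h1⟩, rfl⟩
      constructor
      · show (0:ℝ) ≤ (q:ℝ)
        exact_mod_cast h0
      · show (q:ℝ) ≤ 1
        exact_mod_cast h1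
    apply Set.EqOn.of_subset_closure ?_ hgc hg'c hsub ?_
    · rintro w ⟨q, ⟨h0, h1⟩, rfl⟩
      simp only
      rw [hgr q ⟨h0, h1⟩, hg'r q ⟨h0, h1⟩]
    · intro z hz
      rw [Metric.mem_closure_iff]
      intro ε hε
      rcases eq_or_lt_of_le hz.2 with heq | hz1
      · refine ⟨((1:ℚ):ℝ), ⟨(1:ℚ), ⟨by norm_num, le_rfl⟩, rfl⟩, ?_⟩
        rw [heq]
        simpa using hε
      · obtain ⟨q, hq1, hq2⟩ := exists_rat_btwn
          (show z < min (z+ε) 1 by rw [lt_min_iff]; exact ⟨by linarith, hz1⟩)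
        rw [lt_min_iff] at hq2
        refine ⟨(q:ℝ), ⟨q, ⟨?_, ?_⟩, rfl⟩, ?_⟩
        · have : (0:ℝ) ≤ (q:ℝ) := le_trans hz.1 hq1.le
          exact_mod_cast this
        · have : (q:ℝ) ≤ 1 := hq2.2.le
          exact_mod_cast this
        · rw [Real.dist_eq, abs_lt]
          constructor <;> linarith [hq1, hq2.1]
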